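/- arXiv:1407.3957 — 2 statements merged into one kernel-verified Lean document; each statement's English description precedes it below -/
import Mathlib

section
/- For all real x in the interval [0,1], x - 1 + e^{-x} ≥ x²/e. -/
theorem stmt_0 (x : ℝ) (hx0 : 0 ≤ x) (hx1 : x ≤ 1) :
    x - 1 + Real.exp (-x) ≥ x ^ 2 / Real.exp 1 := by
  have he := Real.exp_one_gt_d9
  have he' := Real.exp_one_lt_d9
  have hep : (0:ℝ) < Real.exp 1 := Real.exp_pos 1
  rcases le_total x (1/2) with hc | hc
  · -- use Taylor of exp(-x) at 0, degree 4 bound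
    have hb : |Real.exp (-x) - ∑ m ∈ Finset.range 4, (-x) ^ m / m.factorial|
        ≤ |(-x)| ^ 4 * ((4:ℕ).succ / ((4:ℕ).factorial * 4)) :=
      Real.exp_bound (by rw [abs_neg, abs_of_nonneg hx0]; exact hx1) (by norm_num)
    have hsum : ∑ m ∈ Finset.range 4, (-x) ^ m / m.factorial
        = 1 - x + x^2/2 - x^3/6 := by
      simp [Finset.sum_range_succ, Nat.factorial]
      ring
    rw [hsum, abs_neg, abs_of_nonneg hx0] at hb
    have hb' := (abs_sub_le_iff.1 hb).2
    -- exp(-x) ≥ 1 - x + x^2/2 - x^3/6 - 5x^4/96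
    have key : Real.exp (-x) ≥ 1 - x + x^2/2 - x^3/6 - x^4 * (5/96) := by
      norm_num [Nat.factorial] at hb'
      nlinarith [hb']
    rw [ge_iff_le, div_le_iff₀ hep]
    nlinarith [pow_nonneg hx0 2, pow_nonneg hx0 3, pow_nonneg hx0 4, sq_nonneg x]
  · -- use Taylor of exp(1-x) at 0
    set u := 1 - x with hu
    have hu0 : 0 ≤ u := by simp [hu]; linarith
    have hu1 : u ≤ 1/2 := by simp [hu]; linarith
    have hb : |Real.exp u - ∑ m ∈ Finset.range 4, u ^ m / m.factorial|
        ≤ |u| ^ 4 * ((4:ℕ).succ / ((4:ℕ).factorial * 4)) :=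
      Real.exp_bound (by rw [abs_of_nonneg hu0]; linarith) (by norm_num)
    have hsum : ∑ m ∈ Finset.range 4, u ^ m / m.factorial
        = 1 + u + u^2/2 + u^3/6 := by
      norm_num [Finset.sum_range_succ, Nat.factorial]
    rw [hsum, abs_of_nonneg hu0] at hb
    have hb' := (abs_sub_le_iff.1 hb).2
    have key : Real.exp u ≥ 1 + u + u^2/2 + u^3/6 - u^4 * (5/96) := by
      norm_num [Nat.factorial] at hb'
      nlinarith [hb']
    have hexp : Real.exp (-x) * Real.exp 1 = Real.exp u := by
      rw [← Real.exp_add]; ring_nf; rfl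
    have hx2 : (x - 1 + Real.exp (-x)) * Real.exp 1 = -u * Real.exp 1 + Real.exp u := by
      rw [← hexp]; ring
    rw [ge_iff_le, div_le_iff₀ hep, hx2]
    nlinarith [key, mul_nonneg hu0 hu0, mul_nonneg (mul_nonneg hu0 hu0) hu0,
      mul_nonneg (mul_nonneg (mul_nonneg hu0 hu0) hu0) hu0,
      mul_nonneg (mul_nonneg hu0 hu0) (sub_nonneg.2 hu1),
      mul_nonneg (mul_nonneg (mul_nonneg hu0 hu0) hu0) (sub_nonneg.2 hu1)]
end

section
/- Let n be a natural number with n ≥ 2, and let L : Fin (n-1) → ℝ be a sequence with values L_t ∈ [0,1] for each t. Then ∑_{t=1}^{n-1} L_t/(n-t) ≥ ln(n / (n - ∑_{t=1}^{n-1} L_t)). -/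
theorem stmt_2 (n : ℕ) (hn : 2 ≤ n) (L : ℕ → ℝ)
    (hL : ∀ t ∈ Finset.Icc 1 (n - 1), L t ∈ Set.Icc (0 : ℝ) 1) :
    ∑ t ∈ Finset.Icc 1 (n - 1), L t / ((n : ℝ) - t) ≥
      Real.log ((n : ℝ) / ((n : ℝ) - ∑ t ∈ Finset.Icc 1 (n - 1), L t)) := by
  set S : ℕ → ℝ := fun i => ∑ s ∈ Finset.Icc 1 i, L s with hSdef
  have hSb : ∀ i, i ≤ n - 1 → 0 ≤ S i ∧ S i ≤ i := by
    intro i hi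
    constructor
    · apply Finset.sum_nonneg
      intro s hs
      exact (hL s (Finset.mem_Icc.mpr ⟨(Finset.mem_Icc.mp hs).1,
        le_trans (Finset.mem_Icc.mp hs).2 hi⟩)).1
    · calc S i ≤ ∑ s ∈ Finset.Icc 1 i, (1 : ℝ) := by
            apply Finset.sum_le_sum
            intro s hs
            exact (hL s (Finset.mem_Icc.mpr ⟨(Finset.mem_Icc.mp hs).1,
              le_trans (Finset.mem_Icc.mp hs).2 hi⟩)).2
        _ = i := by simp
  set f : ℕ → ℝ := fun i => Real.log ((n : ℝ) - S i) with hfdef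
  -- pointwise bound
  have key : ∀ t ∈ Finset.Icc 1 (n - 1), f (t - 1) - f t ≤ L t / ((n : ℝ) - t) := by
    intro t ht
    obtain ⟨ht1, ht2⟩ := Finset.mem_Icc.mp ht
    have hstep : S t = S (t - 1) + L t := by
      have h : t = (t - 1) + 1 := by omega
      rw [h, hSdef]
      simp only
      rw [Finset.sum_Icc_succ_top (by omega : 1 ≤ (t - 1) + 1)]
      rw [← h]
    have htn : (t : ℝ) < n := by exact_mod_cast (by omega : t < n)
    have hSt := hSb t ht2
    have hSt1 := hSb (t - 1) (by omega)
    have hLt := hL t ht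
    have hant : (0 : ℝ) < (n : ℝ) - t := by linarith
    have ha : (0 : ℝ) < (n : ℝ) - S t := by
      have : (t : ℝ) ≤ n - 1 := by
        have : ((t : ℕ) : ℝ) ≤ ((n - 1 : ℕ) : ℝ) := by exact_mod_cast ht2
        rw [Nat.cast_sub (by omega)] at this
        simpa using this
      linarith [hSt.2]
    have hb : (0 : ℝ) < (n : ℝ) - S (t - 1) := by linarith [hLt.1, hstep]
    have h1 : f (t - 1) - f t = Real.log (((n : ℝ) - S (t - 1)) / ((n : ℝ) - S t)) := by
      rw [Real.log_div hb.ne' ha.ne']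
    rw [h1]
    have h2 : Real.log (((n : ℝ) - S (t - 1)) / ((n : ℝ) - S t)) ≤
        ((n : ℝ) - S (t - 1)) / ((n : ℝ) - S t) - 1 :=
      Real.log_le_sub_one_of_pos (div_pos hb ha)
    have h3 : ((n : ℝ) - S (t - 1)) / ((n : ℝ) - S t) - 1 = L t / ((n : ℝ) - S t) := by
      field_simp
      linarith [hstep]
    have h4 : L t / ((n : ℝ) - S t) ≤ L t / ((n : ℝ) - t) := by
      apply div_le_div_of_nonneg_left hLt.1 hant
      linarith [hSt.2]
    linarith
  -- telescoping sum
  have himg : Finset.Icc 1 (n - 1) = Finset.image (· + 1) (Finset.range (n - 1)) := by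
    ext x
    simp only [Finset.mem_Icc, Finset.mem_image, Finset.mem_range]
    constructor
    · rintro ⟨h1, h2⟩; exact ⟨x - 1, by omega, by omega⟩
    · rintro ⟨a, ha, rfl⟩; omega
  have htel : ∑ t ∈ Finset.Icc 1 (n - 1), (f (t - 1) - f t) = f 0 - f (n - 1) := by
    rw [himg, Finset.sum_image (by intro a _ b _ h; beta_reduce at h; omega)]
    have : ∀ i ∈ Finset.range (n - 1), f (i + 1 - 1) - f (i + 1) = f i - f (i + 1) := by
      intro i _; norm_num
    rw [Finset.sum_congr rfl this, Finset.sum_range_sub' f]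
  have hS0 : S 0 = 0 := by simp [hSdef]
  have hnpos : (0 : ℝ) < n := by positivity
  have hSfin : (0 : ℝ) < (n : ℝ) - S (n - 1) := by
    have h := (hSb (n - 1) le_rfl).2
    have : ((n - 1 : ℕ) : ℝ) = (n : ℝ) - 1 := by
      rw [Nat.cast_sub (by omega)]; simp
    linarith [this ▸ h]
  have hlog : Real.log ((n : ℝ) / ((n : ℝ) - S (n - 1))) = f 0 - f (n - 1) := by
    rw [Real.log_div hnpos.ne' hSfin.ne', hfdef]
    simp [hS0]
  calc Real.log ((n : ℝ) / ((n : ℝ) - S (n - 1))) = f 0 - f (n - 1) := hlog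
    _ = ∑ t ∈ Finset.Icc 1 (n - 1), (f (t - 1) - f t) := htel.symm
    _ ≤ ∑ t ∈ Finset.Icc 1 (n - 1), L t / ((n : ℝ) - t) := Finset.sum_le_sum key
end
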